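/- (Diagonal cross-term for convex split.) With the same setup, for a = â and b = b̂, Tr[τ^{-1/4}(ρ^{X_a Y_b M} ⊗ α^{X^{-a}} ⊗ β^{Y^{-b}})τ^{-1/2}(ρ^{X_a Y_b M} ⊗ α^{X^{-a}} ⊗ β^{Y^{-b}})τ^{-1/4}] = 2^{D₂(ρ^{XYM} ‖ α^X ⊗ β^Y ⊗ ρ^M)}. -/

import Mathlib

open Matrix MeasureTheory
open scoped ComplexOrder BigOperators

noncomputable section

variable {n : Type*} [Fintype n] [DecidableEq n]

/-- Frobenius / Schatten-2 norm. -/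
def frob (M : Matrix n n ℂ) : ℝ := Real.sqrt (Mᴴ * M).trace.re

/-- Trace / Schatten-1 norm. -/
def trNorm (M : Matrix n n ℂ) : ℝ :=
  (((Matrix.posSemidef_conjTranspose_mul_self M).1.eigenvectorUnitary : Matrix n n ℂ) *
    Matrix.diagonal (fun i => ((√((Matrix.posSemidef_conjTranspose_mul_self M).1.eigenvalues i) : ℝ) : ℂ)) *
    (star (Matrix.posSemidef_conjTranspose_mul_self M).1.eigenvectorUnitary : Matrix n n ℂ)).trace.re

/-- Real power of a Hermitian matrix via the spectral decomposition, sending zero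
eigenvalues to zero (hence Moore–Penrose pseudoinverse powers for negative exponents);
junk value `0` for non-Hermitian input. -/
def mpow (M : Matrix n n ℂ) (r : ℝ) : Matrix n n ℂ :=
  if h : M.IsHermitian then
    (h.eigenvectorUnitary : Matrix n n ℂ) *
      Matrix.diagonal (fun i =>
        ((if h.eigenvalues i = 0 then (0:ℝ) else h.eigenvalues i ^ r : ℝ) : ℂ)) *
      (h.eigenvectorUnitary : Matrix n n ℂ)ᴴ
  else 0

/-- Operator (Schatten-∞) norm. -/
def opNorm (M : Matrix n n ℂ) : ℝ := ‖(Matrix.toEuclideanLin M).toContinuousLinearMap‖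

/-- Support of a matrix, i.e. its range as a linear map. -/
def supp (M : Matrix n n ℂ) : Submodule ℂ (n → ℂ) := LinearMap.range M.mulVecLin

/-- Rényi-2 divergence (base 2). -/
def D2 (α β : Matrix n n ℂ) : ℝ :=
  2 * Real.logb 2 (frob (mpow β (-(1/4)) * α * mpow β (-(1/4))))

/-- Max (Rényi-∞) divergence (base 2). -/
def Dinf (α β : Matrix n n ℂ) : ℝ :=
  Real.logb 2 (opNorm (mpow β (-(1/2)) * α * mpow β (-(1/2))))

/-- Kronecker / tensor product of square matrices, on the product index type. -/
def kron {m : Type*} (P : Matrix n n ℂ) (Q : Matrix m m ℂ) : Matrix (n × m) (n × m) ℂ :=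
  fun z w => P z.1 w.1 * Q z.2 w.2

variable {X Y M : Type*} [Fintype X] [DecidableEq X] [Fintype Y] [DecidableEq Y]
  [Fintype M] [DecidableEq M]

/-- Marginal on `M` of a state on `X ⊗ Y ⊗ M`. -/
def margM (ρ : Matrix (X × Y × M) (X × Y × M) ℂ) : Matrix M M ℂ :=
  fun m m' => ∑ x, ∑ y, ρ (x, y, m) (x, y, m')

/-- Marginal on `X ⊗ M`. -/
def margXM (ρ : Matrix (X × Y × M) (X × Y × M) ℂ) : Matrix (X × M) (X × M) ℂ :=
  fun z w => ∑ y, ρ (z.1, y, z.2) (w.1, y, w.2)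

/-- Marginal on `Y ⊗ M`. -/
def margYM (ρ : Matrix (X × Y × M) (X × Y × M) ℂ) : Matrix (Y × M) (Y × M) ℂ :=
  fun z w => ∑ x, ρ (x, z.1, z.2) (x, w.1, w.2)

/-- Marginal on `X`. -/
def margX (ρ : Matrix (X × Y × M) (X × Y × M) ℂ) : Matrix X X ℂ :=
  fun x x' => ∑ y, ∑ m, ρ (x, y, m) (x', y, m)

/-- Marginal on `Y`. -/
def margY (ρ : Matrix (X × Y × M) (X × Y × M) ℂ) : Matrix Y Y ℂ :=
  fun y y' => ∑ x, ∑ m, ρ (x, y, m) (x, y', m)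

/-- `ρ^{X_a Y_b M} ⊗ α^{X^{-a}} ⊗ β^{Y^{-b}}` on `X^{⊗A} ⊗ Y^{⊗B} ⊗ M`. -/
def embed (A B : ℕ) (ρ : Matrix (X × Y × M) (X × Y × M) ℂ)
    (α : Matrix X X ℂ) (β : Matrix Y Y ℂ) (a : Fin A) (b : Fin B) :
    Matrix ((Fin A → X) × (Fin B → Y) × M) ((Fin A → X) × (Fin B → Y) × M) ℂ :=
  fun z w => ρ (z.1 a, z.2.1 b, z.2.2) (w.1 a, w.2.1 b, w.2.2) *
    (∏ a' ∈ Finset.univ.erase a, α (z.1 a') (w.1 a')) *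
    (∏ b' ∈ Finset.univ.erase b, β (z.2.1 b') (w.2.1 b'))

/-- Fully decoupled state `τ = α^{⊗A} ⊗ β^{⊗B} ⊗ ρ^M`. -/
def tauCS (A B : ℕ) (ρ : Matrix (X × Y × M) (X × Y × M) ℂ)
    (α : Matrix X X ℂ) (β : Matrix Y Y ℂ) :
    Matrix ((Fin A → X) × (Fin B → Y) × M) ((Fin A → X) × (Fin B → Y) × M) ℂ :=
  fun z w => (∏ a', α (z.1 a') (w.1 a')) * (∏ b', β (z.2.1 b') (w.2.1 b')) *
    margM ρ z.2.2 w.2.2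

/-- `α^X ⊗ β^Y ⊗ ρ^M` on `X ⊗ Y ⊗ M`. -/
def abm (ρ : Matrix (X × Y × M) (X × Y × M) ℂ) (α : Matrix X X ℂ) (β : Matrix Y Y ℂ) :
    Matrix (X × Y × M) (X × Y × M) ℂ :=
  fun z w => α z.1 w.1 * β z.2.1 w.2.1 * margM ρ z.2.2 w.2.2

/-- The convex split state `σ = (AB)⁻¹ ∑_{a,b} ρ^{X_a Y_b M} ⊗ α^{X^{-a}} ⊗ β^{Y^{-b}}`. -/
def csState (A B : ℕ) (ρ : Matrix (X × Y × M) (X × Y × M) ℂ)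
    (α : Matrix X X ℂ) (β : Matrix Y Y ℂ) :
    Matrix ((Fin A → X) × (Fin B → Y) × M) ((Fin A → X) × (Fin B → Y) × M) ℂ :=
  (((A * B : ℕ) : ℂ))⁻¹ • ∑ a : Fin A, ∑ b : Fin B, embed A B ρ α β a b

/-! ### Auxiliary lemmas for `cross_term_diag` -/

section AuxScalar

/-- The scalar function implemented by `mpow`. -/
def gf (r x : ℝ) : ℝ := if x = 0 then 0 else x ^ r

lemma gf_mul {x y : ℝ} (hx : 0 ≤ x) (hy : 0 ≤ y) (r : ℝ) :
    gf r (x * y) = gf r x * gf r y := by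
  rcases eq_or_lt_of_le hx with h | h
  · simp [gf, ← h]
  rcases eq_or_lt_of_le hy with h' | h'
  · simp [gf, ← h']
  simp only [gf, if_neg (by positivity : x * y ≠ 0), if_neg h.ne', if_neg h'.ne']
  exact Real.mul_rpow hx hy

lemma gf_add {x : ℝ} (hx : 0 ≤ x) (r s : ℝ) : gf r x * gf s x = gf (r + s) x := by
  rcases eq_or_lt_of_le hx with h | h
  · simp [gf, ← h]
  · simp only [gf, if_neg h.ne']
    exact (Real.rpow_add h r s).symm

lemma gf_chain {x : ℝ} (hx : 0 ≤ x) :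
    gf (-(1/4)) x * x * gf (-(1/2)) x * x * gf (-(1/4)) x = x := by
  rcases eq_or_lt_of_le hx with h | h
  · simp [gf, ← h]
  · simp only [gf, if_neg h.ne']
    have h2 : x ^ (-(1/4) : ℝ) * x ^ (-(1/2):ℝ) * x ^ (-(1/4):ℝ) * (x * x)
        = x ^ (-(1/4):ℝ) * x * x ^ (-(1/2):ℝ) * x * x ^ (-(1/4):ℝ) := by ring
    rw [← h2, ← Real.rpow_add h, ← Real.rpow_add h]
    norm_num
    rw [Real.rpow_neg_one]
    field_simp

lemma gf_zero_mul {x : ℝ} : gf 0 x * x = x := by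
  rcases eq_or_ne x 0 with h | h
  · simp [gf, h]
  · rw [gf, if_neg h, Real.rpow_zero, one_mul]

lemma gf_prod {ι : Type*} (s : Finset ι) (f : ι → ℝ) (hf : ∀ i ∈ s, 0 ≤ f i) (r : ℝ) :
    gf r (∏ i ∈ s, f i) = ∏ i ∈ s, gf r (f i) := by
  induction s using Finset.cons_induction with
  | empty => simp [gf]
  | cons i s hi ih =>
    rw [Finset.prod_cons, Finset.prod_cons,
      gf_mul (hf i (Finset.mem_cons_self i s))
        (Finset.prod_nonneg fun j hj => hf j (Finset.mem_cons_of_mem hj)),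
      ih (fun j hj => hf j (Finset.mem_cons_of_mem hj))]

end AuxScalar

section AuxSpectral

variable {n : Type*} [Fintype n] [DecidableEq n]

lemma diag_real_conjT (d : n → ℝ) :
    (Matrix.diagonal (fun i => (d i : ℂ)))ᴴ = Matrix.diagonal (fun i => (d i : ℂ)) := by
  ext i j
  rcases eq_or_ne i j with h | h
  · subst h; simp [conjTranspose_apply, diagonal_apply_eq, Complex.conj_ofReal]
  · simp [conjTranspose_apply, diagonal_apply_ne _ h, diagonal_apply_ne _ (Ne.symm h)]

lemma diag_herm (U : Matrix n n ℂ) (d : n → ℝ) :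
    (U * Matrix.diagonal (fun i => (d i : ℂ)) * Uᴴ).IsHermitian := by
  unfold Matrix.IsHermitian
  rw [conjTranspose_mul, conjTranspose_mul, diag_real_conjT, conjTranspose_conjTranspose,
    mul_assoc]

lemma funCalc_welldef (U V : Matrix n n ℂ) (hU1 : U * Uᴴ = 1) (hV1 : V * Vᴴ = 1)
    (d μ : n → ℝ) (g : ℝ → ℝ)
    (hM : U * Matrix.diagonal (fun i => (d i : ℂ)) * Uᴴ
        = V * Matrix.diagonal (fun i => (μ i : ℂ)) * Vᴴ) :
    U * Matrix.diagonal (fun i => (g (d i) : ℂ)) * Uᴴ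
      = V * Matrix.diagonal (fun i => (g (μ i) : ℂ)) * Vᴴ := by
  have hU2 : Uᴴ * U = 1 := mul_eq_one_comm.mp hU1
  have hV2 : Vᴴ * V = 1 := mul_eq_one_comm.mp hV1
  set W := Vᴴ * U with hW
  have hVW : V * W = U := by rw [hW, ← mul_assoc, hV1, one_mul]
  have hWd : W * Matrix.diagonal (fun i => (d i : ℂ))
      = Matrix.diagonal (fun i => (μ i : ℂ)) * W := by
    calc W * Matrix.diagonal (fun i => (d i : ℂ))
        = Vᴴ * (U * Matrix.diagonal (fun i => (d i : ℂ)) * Uᴴ) * U := by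
          rw [hW]; rw [mul_assoc, mul_assoc, mul_assoc, hU2, mul_one, ← mul_assoc]
      _ = Vᴴ * (V * Matrix.diagonal (fun i => (μ i : ℂ)) * Vᴴ) * U := by rw [hM]
      _ = Matrix.diagonal (fun i => (μ i : ℂ)) * W := by
          rw [hW, ← mul_assoc, ← mul_assoc, hV2, one_mul, mul_assoc]
  have hWg : W * Matrix.diagonal (fun i => (g (d i) : ℂ))
      = Matrix.diagonal (fun i => (g (μ i) : ℂ)) * W := by
    ext i j
    have h0 := congrFun (congrFun hWd i) j
    simp only [Matrix.mul_diagonal, Matrix.diagonal_mul] at h0 ⊢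
    rcases eq_or_ne (W i j) 0 with h | h
    · simp [h]
    · have hdm : (d j : ℂ) = (μ i : ℂ) := by
        rw [mul_comm ((μ i : ℂ)) (W i j)] at h0
        exact mul_left_cancel₀ h h0
      rw [Complex.ofReal_inj] at hdm
      rw [hdm, mul_comm]
  have hWW : W * Wᴴ = 1 := by
    rw [hW, conjTranspose_mul, conjTranspose_conjTranspose, mul_assoc, ← mul_assoc U, hU1,
      one_mul, hV2]
  calc U * Matrix.diagonal (fun i => (g (d i) : ℂ)) * Uᴴ
      = V * (W * Matrix.diagonal (fun i => (g (d i) : ℂ)) * Wᴴ) * Vᴴ := by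
        rw [← hVW, conjTranspose_mul]; noncomm_ring
    _ = V * (Matrix.diagonal (fun i => (g (μ i) : ℂ)) * (W * Wᴴ)) * Vᴴ := by
        rw [hWg]; noncomm_ring
    _ = V * Matrix.diagonal (fun i => (g (μ i) : ℂ)) * Vᴴ := by rw [hWW, mul_one, mul_assoc]

lemma eig_unitary_mul_conjT {Mx : Matrix n n ℂ} (h : Mx.IsHermitian) :
    (h.eigenvectorUnitary : Matrix n n ℂ) * (h.eigenvectorUnitary : Matrix n n ℂ)ᴴ = 1 := by
  rw [← star_eq_conjTranspose]
  exact Matrix.mem_unitaryGroup_iff.mp h.eigenvectorUnitary.2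

lemma eig_spectral {Mx : Matrix n n ℂ} (h : Mx.IsHermitian) :
    Mx = (h.eigenvectorUnitary : Matrix n n ℂ)
        * Matrix.diagonal (fun i => (h.eigenvalues i : ℂ))
        * (h.eigenvectorUnitary : Matrix n n ℂ)ᴴ := by
  rw [← star_eq_conjTranspose]
  convert h.spectral_theorem using 2
  rw [Unitary.conjStarAlgAut_apply]; rfl

lemma mpow_eq_conj {Mx U : Matrix n n ℂ} {d : n → ℝ} (hU1 : U * Uᴴ = 1)
    (hM : Mx = U * Matrix.diagonal (fun i => (d i : ℂ)) * Uᴴ) (r : ℝ) :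
    mpow Mx r = U * Matrix.diagonal (fun i => (gf r (d i) : ℂ)) * Uᴴ := by
  have hherm : Mx.IsHermitian := hM ▸ diag_herm U d
  have hdec : U * Matrix.diagonal (fun i => (d i : ℂ)) * Uᴴ
      = (hherm.eigenvectorUnitary : Matrix n n ℂ)
        * Matrix.diagonal (fun i => (hherm.eigenvalues i : ℂ))
        * (hherm.eigenvectorUnitary : Matrix n n ℂ)ᴴ := by
    rw [← hM]; exact eig_spectral hherm
  have key := funCalc_welldef U _ hU1 (eig_unitary_mul_conjT hherm) d hherm.eigenvalues
    (gf r) hdec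
  rw [mpow, dif_pos hherm]
  exact key.symm

lemma conj_mul_conj (U : Matrix n n ℂ) (hU2 : Uᴴ * U = 1) (u v : n → ℂ) :
    (U * Matrix.diagonal u * Uᴴ) * (U * Matrix.diagonal v * Uᴴ)
      = U * Matrix.diagonal (fun i => u i * v i) * Uᴴ := by
  have h1 : (U * Matrix.diagonal u * Uᴴ) * (U * Matrix.diagonal v * Uᴴ)
      = U * (Matrix.diagonal u * ((Uᴴ * U) * Matrix.diagonal v)) * Uᴴ := by noncomm_ring
  rw [h1, hU2, one_mul, Matrix.diagonal_mul_diagonal]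

lemma mpow_mul_mpow {Mx U : Matrix n n ℂ} {d : n → ℝ} (hd : ∀ i, 0 ≤ d i) (hU1 : U * Uᴴ = 1)
    (hM : Mx = U * Matrix.diagonal (fun i => (d i : ℂ)) * Uᴴ) (r s : ℝ) :
    mpow Mx r * mpow Mx s = mpow Mx (r + s) := by
  have hU2 := mul_eq_one_comm.mp hU1
  rw [mpow_eq_conj hU1 hM r, mpow_eq_conj hU1 hM s, mpow_eq_conj hU1 hM (r + s)]
  simp only [conj_mul_conj U hU2]
  have hfun : (fun i => (gf r (d i) : ℂ) * (gf s (d i) : ℂ))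
      = (fun i => ((gf (r + s) (d i) : ℝ) : ℂ)) := by
    funext i
    rw [← Complex.ofReal_mul, gf_add (hd i)]
  rw [hfun]

lemma mpow_isHermitian (Mx : Matrix n n ℂ) (r : ℝ) : (mpow Mx r).IsHermitian := by
  rw [mpow]
  split_ifs with h
  · exact diag_herm _ _
  · exact Matrix.isHermitian_zero

lemma gf_one (x : ℝ) : gf 1 x = x := by
  rcases eq_or_ne x 0 with h | h
  · simp [gf, h]
  · rw [gf, if_neg h, Real.rpow_one]

lemma sandwich {Mx U : Matrix n n ℂ} {d : n → ℝ} (hd : ∀ i, 0 ≤ d i) (hU1 : U * Uᴴ = 1)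
    (hM : Mx = U * Matrix.diagonal (fun i => (d i : ℂ)) * Uᴴ) :
    mpow Mx (-(1/4)) * Mx * mpow Mx (-(1/2)) * Mx * mpow Mx (-(1/4)) = Mx := by
  have hU2 := mul_eq_one_comm.mp hU1
  conv_lhs => rw [mpow_eq_conj hU1 hM (-(1/4)), mpow_eq_conj hU1 hM (-(1/2))]
  rw [hM]
  simp only [conj_mul_conj U hU2]
  have hfun : (fun i => (gf (-(1/4)) (d i) : ℂ) * (d i : ℂ) * (gf (-(1/2)) (d i) : ℂ)
        * (d i : ℂ) * (gf (-(1/4)) (d i) : ℂ)) = (fun i => ((d i : ℝ) : ℂ)) := by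
    funext i
    simp only [← Complex.ofReal_mul]
    exact congrArg Complex.ofReal (gf_chain (hd i))
  rw [hfun]

lemma mpow_zero_mul {Mx U : Matrix n n ℂ} {d : n → ℝ} (hU1 : U * Uᴴ = 1)
    (hM : Mx = U * Matrix.diagonal (fun i => (d i : ℂ)) * Uᴴ) :
    mpow Mx 0 * Mx = Mx := by
  have hU2 := mul_eq_one_comm.mp hU1
  conv_lhs => rw [mpow_eq_conj hU1 hM 0, hM]
  simp only [conj_mul_conj U hU2]
  rw [hM]
  have hfun : (fun i => (gf 0 (d i) : ℂ) * (d i : ℂ)) = (fun i => ((d i : ℝ) : ℂ)) := by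
    funext i
    rw [← Complex.ofReal_mul, gf_zero_mul]
  rw [hfun]

lemma trace_mul_conjT_self_zero (Mx : Matrix n n ℂ) (h : (Mx * Mxᴴ).trace = 0) : Mx = 0 := by
  have hre : ∑ i, ∑ j, Complex.normSq (Mx i j) = 0 := by
    have h2 : (Mx * Mxᴴ).trace = ((∑ i, ∑ j, Complex.normSq (Mx i j) : ℝ) : ℂ) := by
      push_cast
      rw [Matrix.trace]
      refine Finset.sum_congr rfl fun i _ => ?_
      rw [Matrix.diag, Matrix.mul_apply]
      refine Finset.sum_congr rfl fun j _ => ?_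
      rw [Matrix.conjTranspose_apply, ← Complex.mul_conj]
      rfl
    rw [h2] at h
    exact_mod_cast h
  ext i j
  have h1 : ∀ i ∈ (Finset.univ : Finset n), (0:ℝ) ≤ ∑ j, Complex.normSq (Mx i j) :=
    fun i _ => Finset.sum_nonneg fun j _ => Complex.normSq_nonneg _
  have h2 := (Finset.sum_eq_zero_iff_of_nonneg h1).mp hre i (Finset.mem_univ i)
  have h3 := (Finset.sum_eq_zero_iff_of_nonneg
    (fun j _ => Complex.normSq_nonneg (Mx i j))).mp h2 j (Finset.mem_univ j)
  simpa using Complex.normSq_eq_zero.mp h3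

lemma proj_fix {P K : Matrix n n ℂ} {U : Matrix n n ℂ} {d : n → ℝ} (hU1 : U * Uᴴ = 1)
    (hM : P = U * Matrix.diagonal (fun i => (d i : ℂ)) * Uᴴ)
    (hK : supp K ≤ supp P) : mpow P 0 * K = K := by
  have h1 : mpow P 0 * P = P := mpow_zero_mul hU1 hM
  have hcols : ∀ v : n → ℂ, (mpow P 0 * K) *ᵥ v = K *ᵥ v := by
    intro v
    have hKv : K *ᵥ v ∈ supp P := hK ⟨v, rfl⟩
    obtain ⟨u, hu⟩ := hKv
    have hu' : P *ᵥ u = K *ᵥ v := hu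
    rw [← Matrix.mulVec_mulVec, ← hu', Matrix.mulVec_mulVec, h1]
  ext i j
  have := congrFun (hcols (Pi.single j 1)) i
  simpa [Matrix.mulVec_single] using this

end AuxSpectral

section AuxComb

lemma sum_comm3 {A' B' C' : Type*} [Fintype A'] [Fintype B'] [Fintype C']
    (f : A' → B' → C' → ℂ) :
    ∑ u, ∑ v, ∑ w, f u v w = ∑ w, ∑ u, ∑ v, f u v w := by
  have h1 : ∀ u : A', ∑ v, ∑ w, f u v w = ∑ w, ∑ v, f u v w := fun u => Finset.sum_comm
  simp_rw [h1]
  exact Finset.sum_comm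

lemma sum_pi_erase {ι κ : Type*} [Fintype ι] [DecidableEq ι] [Fintype κ]
    (a : ι) (F : κ → ℂ) (H : ι → κ → ℂ) :
    ∑ f : ι → κ, F (f a) * ∏ a' ∈ Finset.univ.erase a, H a' (f a')
      = (∑ x, F x) * ∏ a' ∈ Finset.univ.erase a, ∑ x, H a' x := by
  classical
  set H' : ι → κ → ℂ := fun i => if i = a then F else H i with hH'
  have key : ∀ f : ι → κ, F (f a) * ∏ a' ∈ Finset.univ.erase a, H a' (f a')
      = ∏ i, H' i (f i) := by
    intro f
    rw [← Finset.mul_prod_erase Finset.univ (fun i => H' i (f i)) (Finset.mem_univ a)]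
    congr 1
    · simp [hH']
    · exact Finset.prod_congr rfl fun i hi => by
        simp [hH', if_neg (Finset.mem_erase.mp hi).1]
  simp only [key]
  rw [show (∑ f : ι → κ, ∏ i, H' i (f i)) = ∏ i, ∑ x, H' i x by
    rw [Finset.prod_univ_sum, Fintype.piFinset_univ]]
  rw [← Finset.mul_prod_erase Finset.univ (fun i => ∑ x, H' i x) (Finset.mem_univ a)]
  congr 1
  · simp [hH']
  · exact Finset.prod_congr rfl fun i hi => by
      simp [hH', if_neg (Finset.mem_erase.mp hi).1]

variable {X Y M : Type*} [Fintype X] [DecidableEq X] [Fintype Y] [DecidableEq Y]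
  [Fintype M] [DecidableEq M]

lemma sum_sep_factor {A B : ℕ} (a : Fin A) (b : Fin B)
    (F : X → Y → M → ℂ) (HX : Fin A → X → ℂ) (HY : Fin B → Y → ℂ) :
    (∑ f : Fin A → X, ∑ g : Fin B → Y, ∑ m : M,
      F (f a) (g b) m * (∏ a' ∈ Finset.univ.erase a, HX a' (f a')) *
        (∏ b' ∈ Finset.univ.erase b, HY b' (g b')))
    = (∑ x, ∑ y, ∑ m, F x y m) * (∏ a' ∈ Finset.univ.erase a, ∑ x, HX a' x) *
        (∏ b' ∈ Finset.univ.erase b, ∑ y, HY b' y) := by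
  have inner : ∀ f : Fin A → X,
      (∑ g : Fin B → Y, ∑ m : M, F (f a) (g b) m
          * (∏ a' ∈ Finset.univ.erase a, HX a' (f a'))
          * (∏ b' ∈ Finset.univ.erase b, HY b' (g b')))
      = ((fun x => ∑ y, ∑ m, F x y m) (f a) * (∏ a' ∈ Finset.univ.erase a, HX a' (f a')))
          * (∏ b' ∈ Finset.univ.erase b, ∑ y, HY b' y) := by
    intro f
    have h1 : ∀ g : Fin B → Y, (∑ m : M, F (f a) (g b) m
          * (∏ a' ∈ Finset.univ.erase a, HX a' (f a'))
          * (∏ b' ∈ Finset.univ.erase b, HY b' (g b')))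
        = ((fun y => ∑ m, F (f a) y m) (g b) * (∏ b' ∈ Finset.univ.erase b, HY b' (g b')))
            * (∏ a' ∈ Finset.univ.erase a, HX a' (f a')) := by
      intro g
      simp only []
      rw [Finset.sum_mul, Finset.sum_mul]
      exact Finset.sum_congr rfl fun m _ => by ring
    rw [Finset.sum_congr rfl fun g _ => h1 g, ← Finset.sum_mul,
      sum_pi_erase b (fun y => ∑ m, F (f a) y m) HY]
    ring
  rw [Finset.sum_congr rfl fun f _ => inner f, ← Finset.sum_mul,
    sum_pi_erase a (fun x => ∑ y, ∑ m, F x y m) HX]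

def kron3 (P : Matrix X X ℂ) (Q : Matrix Y Y ℂ) (R : Matrix M M ℂ) :
    Matrix (X × Y × M) (X × Y × M) ℂ :=
  fun z w => P z.1 w.1 * Q z.2.1 w.2.1 * R z.2.2 w.2.2

lemma sum3_factor {A' B' C' : Type*} [Fintype A'] [Fintype B'] [Fintype C']
    (f : A' → ℂ) (g : B' → ℂ) (h : C' → ℂ) :
    (∑ u, ∑ v, ∑ w, f u * g v * h w) = (∑ u, f u) * (∑ v, g v) * (∑ w, h w) := by
  simp_rw [mul_assoc, ← Finset.mul_sum, ← Finset.sum_mul]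

lemma kron3_mul (P P' : Matrix X X ℂ) (Q Q' : Matrix Y Y ℂ) (R R' : Matrix M M ℂ) :
    kron3 P Q R * kron3 P' Q' R' = kron3 (P * P') (Q * Q') (R * R') := by
  ext z w
  simp only [kron3, Matrix.mul_apply, Fintype.sum_prod_type]
  trans (∑ x, P z.1 x * P' x w.1) * (∑ y, Q z.2.1 y * Q' y w.2.1)
      * (∑ m, R z.2.2 m * R' m w.2.2)
  · rw [← sum3_factor]
    exact Finset.sum_congr rfl fun x _ => Finset.sum_congr rfl fun y _ =>
      Finset.sum_congr rfl fun m _ => by ring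
  · rfl

lemma kron3_one :
    kron3 (1 : Matrix X X ℂ) (1 : Matrix Y Y ℂ) (1 : Matrix M M ℂ) = 1 := by
  ext ⟨x, y, m⟩ ⟨x', y', m'⟩
  by_cases h1 : x = x' <;> by_cases h2 : y = y' <;> by_cases h3 : m = m' <;>
    simp [kron3, Matrix.one_apply, Prod.ext_iff, h1, h2, h3]

lemma kron3_conjT (P : Matrix X X ℂ) (Q : Matrix Y Y ℂ) (R : Matrix M M ℂ) :
    (kron3 P Q R)ᴴ = kron3 Pᴴ Qᴴ Rᴴ := by
  ext z w
  simp [kron3, Matrix.conjTranspose_apply, star_mul']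

lemma kron3_sub_left (P P' : Matrix X X ℂ) (Q : Matrix Y Y ℂ) (R : Matrix M M ℂ) :
    kron3 (P - P') Q R = kron3 P Q R - kron3 P' Q R := by
  ext z w
  simp [kron3, Matrix.sub_apply, sub_mul]

lemma kron3_sub_mid (P : Matrix X X ℂ) (Q Q' : Matrix Y Y ℂ) (R : Matrix M M ℂ) :
    kron3 P (Q - Q') R = kron3 P Q R - kron3 P Q' R := by
  ext z w
  simp [kron3, Matrix.sub_apply, sub_mul, mul_sub]

lemma kron3_sub_right (P : Matrix X X ℂ) (Q : Matrix Y Y ℂ) (R R' : Matrix M M ℂ) :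
    kron3 P Q (R - R') = kron3 P Q R - kron3 P Q R' := by
  ext z w
  simp [kron3, Matrix.sub_apply, mul_sub]

lemma kron3_diagonal (u : X → ℂ) (v : Y → ℂ) (t : M → ℂ) :
    kron3 (Matrix.diagonal u) (Matrix.diagonal v) (Matrix.diagonal t)
      = Matrix.diagonal (fun z : X × Y × M => u z.1 * v z.2.1 * t z.2.2) := by
  ext ⟨x, y, m⟩ ⟨x', y', m'⟩
  by_cases h1 : x = x' <;> by_cases h2 : y = y' <;> by_cases h3 : m = m' <;>
    simp [kron3, Matrix.diagonal_apply, Prod.ext_iff, h1, h2, h3]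

lemma trace_kron3_X (S : Matrix X X ℂ) (ρ : Matrix (X × Y × M) (X × Y × M) ℂ) :
    (kron3 S (1 : Matrix Y Y ℂ) (1 : Matrix M M ℂ) * ρ).trace = (S * margX ρ).trace := by
  simp only [Matrix.trace, Matrix.diag, Matrix.mul_apply, kron3, Matrix.one_apply, margX,
    Fintype.sum_prod_type, ite_mul, one_mul, zero_mul, mul_ite, mul_one, mul_zero,
    Finset.sum_ite_eq, Finset.sum_ite_eq', Finset.mem_univ, if_true, Finset.mul_sum]
  refine Finset.sum_congr rfl fun x _ => ?_
  exact sum_comm3 (fun y m x3 => S x x3 * ρ (x3, y, m) (x, y, m))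

lemma trace_kron3_Y (S : Matrix Y Y ℂ) (ρ : Matrix (X × Y × M) (X × Y × M) ℂ) :
    (kron3 (1 : Matrix X X ℂ) S (1 : Matrix M M ℂ) * ρ).trace = (S * margY ρ).trace := by
  simp only [Matrix.trace, Matrix.diag, Matrix.mul_apply, kron3, Matrix.one_apply, margY,
    Fintype.sum_prod_type, ite_mul, one_mul, zero_mul, mul_ite, mul_one, mul_zero,
    Finset.sum_ite_eq, Finset.sum_ite_eq', Finset.mem_univ, if_true, Finset.mul_sum]
  have h1 : ∀ (x : X) (y : Y) (m : M),
      (∑ x3 : X, ∑ y4 : Y, if x = x3 then S y y4 * ρ (x3, y4, m) (x, y, m) else 0)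
        = ∑ y4 : Y, S y y4 * ρ (x, y4, m) (x, y, m) := by
    intro x y m
    rw [Finset.sum_comm]
    simp
  simp_rw [h1]
  have h2 : ∀ x : X, (∑ y : Y, ∑ m : M, ∑ y4 : Y, S y y4 * ρ (x, y4, m) (x, y, m))
      = ∑ y4 : Y, ∑ y : Y, ∑ m : M, S y y4 * ρ (x, y4, m) (x, y, m) :=
    fun x => sum_comm3 (fun y m y4 => S y y4 * ρ (x, y4, m) (x, y, m))
  simp_rw [h2]
  rw [sum_comm3 (fun x y4 y => ∑ m : M, S y y4 * ρ (x, y4, m) (x, y, m))]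
  refine Finset.sum_congr rfl fun y _ => Finset.sum_comm

lemma trace_kron3_M (S : Matrix M M ℂ) (ρ : Matrix (X × Y × M) (X × Y × M) ℂ) :
    (kron3 (1 : Matrix X X ℂ) (1 : Matrix Y Y ℂ) S * ρ).trace = (S * margM ρ).trace := by
  simp only [Matrix.trace, Matrix.diag, Matrix.mul_apply, kron3, Matrix.one_apply, margM,
    Fintype.sum_prod_type, ite_mul, one_mul, zero_mul, mul_ite, mul_one, mul_zero,
    Finset.sum_ite_eq, Finset.sum_ite_eq', Finset.mem_univ, if_true, Finset.mul_sum]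
  have h1 : ∀ (x : X) (y : Y) (m : M),
      (∑ x3 : X, ∑ y4 : Y, ∑ m5 : M,
          if y = y4 then if x = x3 then S m m5 * ρ (x3, y4, m5) (x, y, m) else 0 else 0)
        = ∑ m5 : M, S m m5 * ρ (x, y, m5) (x, y, m) := by
    intro x y m
    simp [Finset.sum_ite_irrel]
  simp_rw [h1]
  rw [sum_comm3 (fun x y m => ∑ m5 : M, S m m5 * ρ (x, y, m5) (x, y, m))]
  refine Finset.sum_congr rfl fun m _ => ?_
  exact sum_comm3 (fun x y m5 => S m m5 * ρ (x, y, m5) (x, y, m))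

lemma margM_posSemidef {ρ : Matrix (X × Y × M) (X × Y × M) ℂ} (hρ : ρ.PosSemidef) :
    (margM ρ).PosSemidef := by
  have key : margM ρ = ∑ p : X × Y,
      (Matrix.of fun (m : M) (u : X × Y × M) => if u = (p.1, p.2, m) then (1:ℂ) else 0) * ρ *
      (Matrix.of fun (m : M) (u : X × Y × M) => if u = (p.1, p.2, m) then (1:ℂ) else 0)ᴴ := by
    ext m m'
    simp only [Matrix.sum_apply, Matrix.mul_apply, Matrix.conjTranspose_apply, Matrix.of_apply]
    simp only [ite_mul, one_mul, zero_mul, Finset.sum_ite_eq', Finset.mem_univ, if_true,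
      apply_ite (star : ℂ → ℂ), star_one, star_zero, mul_ite, mul_one, mul_zero]
    rw [margM, Fintype.sum_prod_type]
  rw [key]
  exact Finset.sum_induction _ Matrix.PosSemidef (fun A B hA hB => hA.add hB)
    Matrix.PosSemidef.zero (fun p _ => hρ.mul_mul_conjTranspose_same _)

end AuxComb

section AuxEmbed

variable {X Y M : Type*} [Fintype X] [DecidableEq X] [Fintype Y] [DecidableEq Y]
  [Fintype M] [DecidableEq M] {A B : ℕ}

lemma embed_mul (a : Fin A) (b : Fin B) (G G' : Matrix (X × Y × M) (X × Y × M) ℂ)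
    (P P' : Matrix X X ℂ) (Q Q' : Matrix Y Y ℂ) :
    embed A B G P Q a b * embed A B G' P' Q' a b
      = embed A B (G * G') (P * P') (Q * Q') a b := by
  ext z w
  simp only [embed, Matrix.mul_apply, Fintype.sum_prod_type]
  have h := sum_sep_factor a b
    (fun x y m' => G (z.1 a, z.2.1 b, z.2.2) (x, y, m') * G' (x, y, m') (w.1 a, w.2.1 b, w.2.2))
    (fun a' t => P (z.1 a') t * P' t (w.1 a'))
    (fun b' t => Q (z.2.1 b') t * Q' t (w.2.1 b'))
  beta_reduce at h
  rw [← h]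
  refine Finset.sum_congr rfl fun f _ => Finset.sum_congr rfl fun g _ =>
    Finset.sum_congr rfl fun m _ => ?_
  rw [Finset.prod_mul_distrib, Finset.prod_mul_distrib]
  ring

lemma embed_trace (a : Fin A) (b : Fin B) (G : Matrix (X × Y × M) (X × Y × M) ℂ)
    (P : Matrix X X ℂ) (Q : Matrix Y Y ℂ) :
    (embed A B G P Q a b).trace
      = G.trace * (∏ _a' ∈ Finset.univ.erase a, P.trace)
          * (∏ _b' ∈ Finset.univ.erase b, Q.trace) := by
  simp only [Matrix.trace, Matrix.diag, embed, Fintype.sum_prod_type]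
  have h := sum_sep_factor a b
    (fun x y m' => G (x, y, m') (x, y, m')) (fun _ t => P t t) (fun _ t => Q t t)
  beta_reduce at h
  rw [← h]

lemma embed_conjT (a : Fin A) (b : Fin B) (G : Matrix (X × Y × M) (X × Y × M) ℂ)
    (P : Matrix X X ℂ) (Q : Matrix Y Y ℂ) :
    (embed A B G P Q a b)ᴴ = embed A B Gᴴ Pᴴ Qᴴ a b := by
  ext z w
  simp only [embed, Matrix.conjTranspose_apply, star_mul', star_prod]

lemma embed_apply_ne (a : Fin A) (b : Fin B) {G : Matrix (X × Y × M) (X × Y × M) ℂ}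
    {P : Matrix X X ℂ} {Q : Matrix Y Y ℂ}
    (hG : ∀ u v, u ≠ v → G u v = 0) (hP : ∀ x x', x ≠ x' → P x x' = 0)
    (hQ : ∀ y y', y ≠ y' → Q y y' = 0)
    {z w : (Fin A → X) × (Fin B → Y) × M} (h : z ≠ w) :
    embed A B G P Q a b z w = 0 := by
  rw [embed]
  have hcomp : z.1 ≠ w.1 ∨ z.2.1 ≠ w.2.1 ∨ z.2.2 ≠ w.2.2 := by
    by_contra hc
    push_neg at hc
    exact h (Prod.ext hc.1 (Prod.ext hc.2.1 hc.2.2))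
  rcases hcomp with h1 | h2 | h3
  · obtain ⟨a0, ha0⟩ := Function.ne_iff.mp h1
    rcases eq_or_ne a0 a with rfl | hne
    · rw [hG _ _ (by simp [Prod.ext_iff]; intro h'; exact absurd h' ha0), zero_mul, zero_mul]
    · rw [Finset.prod_eq_zero (Finset.mem_erase.mpr ⟨hne, Finset.mem_univ a0⟩) (hP _ _ ha0),
        mul_zero, zero_mul]
  · obtain ⟨b0, hb0⟩ := Function.ne_iff.mp h2
    rcases eq_or_ne b0 b with rfl | hne
    · rw [hG _ _ (by simp [Prod.ext_iff]; intro _ h'; exact absurd h' hb0), zero_mul, zero_mul]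
    · rw [Finset.prod_eq_zero (Finset.mem_erase.mpr ⟨hne, Finset.mem_univ b0⟩) (hQ _ _ hb0),
        mul_zero]
  · rw [hG _ _ (by simp [Prod.ext_iff]; intro _ _ h'; exact absurd h' h3), zero_mul, zero_mul]

lemma embed_one (a : Fin A) (b : Fin B) :
    embed A B (1 : Matrix (X × Y × M) (X × Y × M) ℂ) (1 : Matrix X X ℂ)
      (1 : Matrix Y Y ℂ) a b = 1 := by
  ext z w
  rcases eq_or_ne z w with rfl | h
  · simp [embed, Matrix.one_apply]
  · rw [Matrix.one_apply_ne h]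
    exact embed_apply_ne a b (fun u v huv => Matrix.one_apply_ne huv)
      (fun x x' hx => Matrix.one_apply_ne hx) (fun y y' hy => Matrix.one_apply_ne hy) h

lemma embed_diagonal (a : Fin A) (b : Fin B) (u : X × Y × M → ℂ) (v : X → ℂ) (t : Y → ℂ) :
    embed A B (Matrix.diagonal u) (Matrix.diagonal v) (Matrix.diagonal t) a b
      = Matrix.diagonal (fun z : (Fin A → X) × (Fin B → Y) × M =>
          u (z.1 a, z.2.1 b, z.2.2) * (∏ a' ∈ Finset.univ.erase a, v (z.1 a'))
            * (∏ b' ∈ Finset.univ.erase b, t (z.2.1 b'))) := by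
  ext z w
  rcases eq_or_ne z w with rfl | h
  · simp [embed, Matrix.diagonal_apply_eq]
  · rw [Matrix.diagonal_apply_ne _ h]
    exact embed_apply_ne a b (fun u' v' huv => Matrix.diagonal_apply_ne _ huv)
      (fun x x' hx => Matrix.diagonal_apply_ne _ hx)
      (fun y y' hy => Matrix.diagonal_apply_ne _ hy) h

lemma tau_eq (a : Fin A) (b : Fin B) (ρ : Matrix (X × Y × M) (X × Y × M) ℂ)
    (α : Matrix X X ℂ) (β : Matrix Y Y ℂ) :
    tauCS A B ρ α β = embed A B (abm ρ α β) α β a b := by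
  ext z w
  rw [tauCS, embed, abm,
    ← Finset.mul_prod_erase Finset.univ (fun a' => α (z.1 a') (w.1 a')) (Finset.mem_univ a),
    ← Finset.mul_prod_erase Finset.univ (fun b' => β (z.2.1 b') (w.2.1 b')) (Finset.mem_univ b)]
  ring

end AuxEmbed

section AuxBuild

variable {n : Type*} [Fintype n] [DecidableEq n]

lemma kill_left {ρ K : Matrix n n ℂ} (hρ : ρ.PosSemidef)
    (hKh : Kᴴ = K) (hKK : K * K = K) (htr : (K * ρ).trace = 0) : K * ρ = 0 := by
  obtain ⟨S, hsh, hSS⟩ : ∃ S : Matrix n n ℂ, S.IsHermitian ∧ S * S = ρ := by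
    have hU2 := mul_eq_one_comm.mp (eig_unitary_mul_conjT hρ.1)
    refine ⟨(hρ.1.eigenvectorUnitary : Matrix n n ℂ)
      * Matrix.diagonal (fun i => ((Real.sqrt (hρ.1.eigenvalues i) : ℝ) : ℂ))
      * (hρ.1.eigenvectorUnitary : Matrix n n ℂ)ᴴ, diag_herm _ _, ?_⟩
    simp only [conj_mul_conj _ hU2, ← Complex.ofReal_mul,
      Real.mul_self_sqrt (hρ.eigenvalues_nonneg _)]
    exact (eig_spectral hρ.1).symm
  have key : ((K * S) * (K * S)ᴴ).trace = 0 := by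
    rw [Matrix.conjTranspose_mul, hKh, show Sᴴ = S from hsh]
    have h2 : K * S * (S * K) = K * (S * S) * K := by noncomm_ring
    rw [h2, hSS, Matrix.trace_mul_comm, ← mul_assoc, hKK, htr]
  have h0 : K * S = 0 := trace_mul_conjT_self_zero _ key
  calc K * ρ = (K * S) * S := by rw [mul_assoc, hSS]
    _ = 0 := by rw [h0, zero_mul]

variable {X Y M : Type*} [Fintype X] [DecidableEq X] [Fintype Y] [DecidableEq Y]
  [Fintype M] [DecidableEq M] {A B : ℕ}

lemma kron3_conj_build (U1 : Matrix X X ℂ) (U2 : Matrix Y Y ℂ) (U3 : Matrix M M ℂ)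
    (u : X → ℂ) (v : Y → ℂ) (t : M → ℂ) :
    kron3 (U1 * Matrix.diagonal u * U1ᴴ) (U2 * Matrix.diagonal v * U2ᴴ)
        (U3 * Matrix.diagonal t * U3ᴴ)
      = kron3 U1 U2 U3
          * Matrix.diagonal (fun z : X × Y × M => u z.1 * v z.2.1 * t z.2.2)
          * (kron3 U1 U2 U3)ᴴ := by
  rw [← kron3_mul, ← kron3_mul, kron3_diagonal, ← kron3_conjT]

lemma embed_conj_build (a : Fin A) (b : Fin B) (W0 : Matrix (X × Y × M) (X × Y × M) ℂ)
    (U1 : Matrix X X ℂ) (U2 : Matrix Y Y ℂ)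
    (u : X × Y × M → ℂ) (v : X → ℂ) (t : Y → ℂ) :
    embed A B (W0 * Matrix.diagonal u * W0ᴴ) (U1 * Matrix.diagonal v * U1ᴴ)
        (U2 * Matrix.diagonal t * U2ᴴ) a b
      = embed A B W0 U1 U2 a b
          * Matrix.diagonal (fun z : (Fin A → X) × (Fin B → Y) × M =>
              u (z.1 a, z.2.1 b, z.2.2) * (∏ a' ∈ Finset.univ.erase a, v (z.1 a'))
                * (∏ b' ∈ Finset.univ.erase b, t (z.2.1 b')))
          * (embed A B W0 U1 U2 a b)ᴴ := by
  rw [← embed_mul, ← embed_mul, embed_diagonal, ← embed_conjT]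

end AuxBuild

/-- Fully diagonal cross term equals `2^{D₂(ρ^{XYM} ‖ α^X ⊗ β^Y ⊗ ρ^M)}`. -/
theorem cross_term_diag {X Y M : Type*} [Fintype X] [DecidableEq X] [Fintype Y]
    [DecidableEq Y] [Fintype M] [DecidableEq M] {A B : ℕ}
    (ρ : Matrix (X × Y × M) (X × Y × M) ℂ) (hρ : ρ.PosSemidef) (hρ1 : ρ.trace = 1)
    (α : Matrix X X ℂ) (hα : α.PosSemidef) (hα1 : α.trace = 1)
    (β : Matrix Y Y ℂ) (hβ : β.PosSemidef) (hβ1 : β.trace = 1)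
    (hsX : supp (margX ρ) ≤ supp α) (hsY : supp (margY ρ) ≤ supp β)
    (a : Fin A) (b : Fin B) :
    (mpow (tauCS A B ρ α β) (-(1/4)) * embed A B ρ α β a b *
      mpow (tauCS A B ρ α β) (-(1/2)) * embed A B ρ α β a b *
      mpow (tauCS A B ρ α β) (-(1/4))).trace =
      (((2:ℝ) ^ D2 ρ (abm ρ α β) : ℝ) : ℂ) := by
  classical
  -- spectral data for α, β and margM ρ
  have hMps : (margM ρ).PosSemidef := margM_posSemidef hρ
  set dα : X → ℝ := hα.1.eigenvalues with hdα_def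
  set Uα : Matrix X X ℂ := (hα.1.eigenvectorUnitary : Matrix X X ℂ) with hUα_def
  have hUα1 : Uα * Uαᴴ = 1 := eig_unitary_mul_conjT hα.1
  have hαd : α = Uα * Matrix.diagonal (fun i => (dα i : ℂ)) * Uαᴴ := eig_spectral hα.1
  have hdα0 : ∀ i, 0 ≤ dα i := fun i => hα.eigenvalues_nonneg i
  set dβ : Y → ℝ := hβ.1.eigenvalues with hdβ_def
  set Uβ : Matrix Y Y ℂ := (hβ.1.eigenvectorUnitary : Matrix Y Y ℂ) with hUβ_def
  have hUβ1 : Uβ * Uβᴴ = 1 := eig_unitary_mul_conjT hβ.1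
  have hβd : β = Uβ * Matrix.diagonal (fun i => (dβ i : ℂ)) * Uβᴴ := eig_spectral hβ.1
  have hdβ0 : ∀ i, 0 ≤ dβ i := fun i => hβ.eigenvalues_nonneg i
  set dm : M → ℝ := hMps.1.eigenvalues with hdm_def
  set Um : Matrix M M ℂ := (hMps.1.eigenvectorUnitary : Matrix M M ℂ) with hUm_def
  have hUm1 : Um * Umᴴ = 1 := eig_unitary_mul_conjT hMps.1
  have hmd : margM ρ = Um * Matrix.diagonal (fun i => (dm i : ℂ)) * Umᴴ :=
    eig_spectral hMps.1
  have hdm0 : ∀ i, 0 ≤ dm i := fun i => hMps.eigenvalues_nonneg i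
  -- spectral data for ω = abm ρ α β
  set ω := abm ρ α β with hω_def
  set Uω : Matrix (X × Y × M) (X × Y × M) ℂ := kron3 Uα Uβ Um with hUω_def
  set dω : X × Y × M → ℝ := fun z => dα z.1 * dβ z.2.1 * dm z.2.2 with hdω_def
  have hdω0 : ∀ z, 0 ≤ dω z := fun z =>
    mul_nonneg (mul_nonneg (hdα0 _) (hdβ0 _)) (hdm0 _)
  have hωd : ω = Uω * Matrix.diagonal (fun z => (dω z : ℂ)) * Uωᴴ := by
    have h0 : ω = kron3 α β (margM ρ) := rfl
    rw [h0]
    conv_lhs => rw [hαd, hβd, hmd]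
    rw [kron3_conj_build]
    beta_reduce
    suffices hf : (fun z : X × Y × M => (dα z.1 : ℂ) * (dβ z.2.1 : ℂ) * (dm z.2.2 : ℂ))
        = (fun z : X × Y × M => (dω z : ℂ)) by rw [hf, hUω_def]
    funext z
    simp only [hdω_def]
    push_cast
    ring
  have hUω1 : Uω * Uωᴴ = 1 := by
    rw [hUω_def, kron3_conjT, kron3_mul, hUα1, hUβ1, hUm1, kron3_one]
  have hmpowω : ∀ r : ℝ, mpow ω r = kron3 (mpow α r) (mpow β r) (mpow (margM ρ) r) := by
    intro r
    rw [mpow_eq_conj hUω1 hωd r, mpow_eq_conj hUα1 hαd r, mpow_eq_conj hUβ1 hβd r,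
      mpow_eq_conj hUm1 hmd r, kron3_conj_build]
    beta_reduce
    suffices hf : (fun z : X × Y × M => (gf r (dω z) : ℂ))
        = (fun z : X × Y × M =>
            (gf r (dα z.1) : ℂ) * (gf r (dβ z.2.1) : ℂ) * (gf r (dm z.2.2) : ℂ)) by
      rw [hf, hUω_def]
    funext z
    simp only [hdω_def]
    rw [gf_mul (mul_nonneg (hdα0 _) (hdβ0 _)) (hdm0 _) r, gf_mul (hdα0 _) (hdβ0 _) r]
    push_cast
    ring
  -- spectral data for τ
  set W : Matrix ((Fin A → X) × (Fin B → Y) × M) ((Fin A → X) × (Fin B → Y) × M) ℂ :=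
    embed A B Uω Uα Uβ a b with hW_def
  set D : (Fin A → X) × (Fin B → Y) × M → ℝ :=
    fun z => dω (z.1 a, z.2.1 b, z.2.2) * (∏ a' ∈ Finset.univ.erase a, dα (z.1 a'))
      * (∏ b' ∈ Finset.univ.erase b, dβ (z.2.1 b')) with hD_def
  have hD0 : ∀ z, 0 ≤ D z := fun z =>
    mul_nonneg (mul_nonneg (hdω0 _) (Finset.prod_nonneg fun _ _ => hdα0 _))
      (Finset.prod_nonneg fun _ _ => hdβ0 _)
  have hτd : tauCS A B ρ α β = W * Matrix.diagonal (fun z => (D z : ℂ)) * Wᴴ := by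
    rw [tau_eq a b ρ α β]
    conv_lhs => rw [← hω_def, hωd, hαd, hβd]
    rw [embed_conj_build]
    beta_reduce
    suffices hf : (fun z : (Fin A → X) × (Fin B → Y) × M =>
        ((dω (z.1 a, z.2.1 b, z.2.2) : ℂ))
          * (∏ a' ∈ Finset.univ.erase a, (dα (z.1 a') : ℂ))
          * (∏ b' ∈ Finset.univ.erase b, (dβ (z.2.1 b') : ℂ)))
        = (fun z : (Fin A → X) × (Fin B → Y) × M => (D z : ℂ)) by rw [hf, hW_def]
    funext z
    simp only [hD_def]
    push_cast
    ring
  have hW1 : W * Wᴴ = 1 := by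
    rw [hW_def, embed_conjT, embed_mul, hUω1, hUα1, hUβ1, embed_one]
  have hmpowτ : ∀ r : ℝ, mpow (tauCS A B ρ α β) r
      = embed A B (mpow ω r) (mpow α r) (mpow β r) a b := by
    intro r
    rw [mpow_eq_conj hW1 hτd r, mpow_eq_conj hUω1 hωd r, mpow_eq_conj hUα1 hαd r,
      mpow_eq_conj hUβ1 hβd r, embed_conj_build]
    beta_reduce
    suffices hf : (fun z : (Fin A → X) × (Fin B → Y) × M => (gf r (D z) : ℂ))
        = (fun z : (Fin A → X) × (Fin B → Y) × M =>
            (gf r (dω (z.1 a, z.2.1 b, z.2.2)) : ℂ)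
              * (∏ a' ∈ Finset.univ.erase a, (gf r (dα (z.1 a')) : ℂ))
              * (∏ b' ∈ Finset.univ.erase b, (gf r (dβ (z.2.1 b')) : ℂ))) by
      rw [hf, hW_def]
    funext z
    simp only [hD_def]
    rw [gf_mul (mul_nonneg (hdω0 _) (Finset.prod_nonneg fun _ _ => hdα0 _))
        (Finset.prod_nonneg fun _ _ => hdβ0 _) r,
      gf_mul (hdω0 _) (Finset.prod_nonneg fun _ _ => hdα0 _) r,
      gf_prod _ _ (fun _ _ => hdα0 _) r, gf_prod _ _ (fun _ _ => hdβ0 _) r]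
    push_cast
    ring
  -- collapse the big product
  rw [hmpowτ (-(1/4)), hmpowτ (-(1/2)), embed_mul, embed_mul, embed_mul, embed_mul,
    embed_trace, sandwich hdα0 hUα1 hαd, sandwich hdβ0 hUβ1 hβd, hα1, hβ1]
  simp only [Finset.prod_const_one, mul_one]
  -- now the single-copy computation
  have h42 : mpow ω (-(1/2)) = mpow ω (-(1/4)) * mpow ω (-(1/4)) := by
    rw [mpow_mul_mpow hdω0 hUω1 hωd]
    norm_num
  set L : Matrix (X × Y × M) (X × Y × M) ℂ := mpow ω (-(1/4)) * ρ * mpow ω (-(1/4))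
    with hL_def
  have hgoalL : mpow ω (-(1/4)) * ρ * mpow ω (-(1/2)) * ρ * mpow ω (-(1/4)) = L * L := by
    rw [h42, hL_def]
    noncomm_ring
  rw [hgoalL]
  have hPh : (mpow ω (-(1/4)))ᴴ = mpow ω (-(1/4)) := mpow_isHermitian ω (-(1/4))
  have hLh : Lᴴ = L := by
    rw [hL_def, Matrix.conjTranspose_mul, Matrix.conjTranspose_mul, hPh,
      show ρᴴ = ρ from hρ.1, ← mul_assoc]
  set S : ℝ := ∑ z, ∑ w', Complex.normSq (L z w') with hS_def
  have htr : (L * L).trace = (S : ℂ) := by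
    rw [Matrix.trace, hS_def]
    push_cast
    refine Finset.sum_congr rfl fun i _ => ?_
    rw [Matrix.diag, Matrix.mul_apply]
    refine Finset.sum_congr rfl fun j _ => ?_
    have hji : L j i = star (L i j) := by
      rw [← Matrix.conjTranspose_apply, hLh]
    rw [hji, ← Complex.mul_conj]
    rfl
  have hS0 : 0 ≤ S := Finset.sum_nonneg fun _ _ =>
    Finset.sum_nonneg fun _ _ => Complex.normSq_nonneg _
  have hfrob : frob L = Real.sqrt S := by
    rw [frob, hLh, htr, Complex.ofReal_re]
  -- positivity of S via support conditions
  have hαidem : mpow α 0 * mpow α 0 = mpow α 0 := by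
    rw [mpow_mul_mpow hdα0 hUα1 hαd]; norm_num
  have hβidem : mpow β 0 * mpow β 0 = mpow β 0 := by
    rw [mpow_mul_mpow hdβ0 hUβ1 hβd]; norm_num
  have hmidem : mpow (margM ρ) 0 * mpow (margM ρ) 0 = mpow (margM ρ) 0 := by
    rw [mpow_mul_mpow hdm0 hUm1 hmd]; norm_num
  have hXfix : mpow α 0 * margX ρ = margX ρ := proj_fix hUα1 hαd hsX
  have hYfix : mpow β 0 * margY ρ = margY ρ := proj_fix hUβ1 hβd hsY
  have hMfix : mpow (margM ρ) 0 * margM ρ = margM ρ := mpow_zero_mul hUm1 hmd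
  have projgen : ∀ (K0 K1 : Matrix (X × Y × M) (X × Y × M) ℂ),
      K1 = 1 - K0 → K1ᴴ = K1 → K1 * K1 = K1 → (K1 * ρ).trace = 0 → K0 * ρ = ρ := by
    intro K0 K1 hK1 hh hii htr0
    have hkill : K1 * ρ = 0 := kill_left hρ hh hii htr0
    rw [hK1, Matrix.sub_mul, one_mul] at hkill
    exact (sub_eq_zero.mp hkill).symm
  have hermPa : (mpow α 0)ᴴ = mpow α 0 := mpow_isHermitian α 0
  have hermPb : (mpow β 0)ᴴ = mpow β 0 := mpow_isHermitian β 0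
  have hermPm : (mpow (margM ρ) 0)ᴴ = mpow (margM ρ) 0 := mpow_isHermitian (margM ρ) 0
  have projX : kron3 (mpow α 0) (1 : Matrix Y Y ℂ) (1 : Matrix M M ℂ) * ρ = ρ := by
    refine projgen _ (kron3 ((1 : Matrix X X ℂ) - mpow α 0) 1 1) ?_ ?_ ?_ ?_
    · rw [kron3_sub_left, kron3_one]
    · simp only [kron3_conjT, Matrix.conjTranspose_sub, Matrix.conjTranspose_one, hermPa]
    · have hsq : ((1 : Matrix X X ℂ) - mpow α 0) * (1 - mpow α 0) = 1 - mpow α 0 := by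
        have h2 : ((1 : Matrix X X ℂ) - mpow α 0) * (1 - mpow α 0)
            = 1 - mpow α 0 - mpow α 0 + mpow α 0 * mpow α 0 := by noncomm_ring
        rw [h2, hαidem]
        abel
      simp only [kron3_mul, hsq, one_mul]
    · rw [trace_kron3_X, Matrix.sub_mul, one_mul, hXfix, sub_self, Matrix.trace_zero]
  have projY : kron3 (1 : Matrix X X ℂ) (mpow β 0) (1 : Matrix M M ℂ) * ρ = ρ := by
    refine projgen _ (kron3 1 ((1 : Matrix Y Y ℂ) - mpow β 0) 1) ?_ ?_ ?_ ?_
    · rw [kron3_sub_mid, kron3_one]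
    · simp only [kron3_conjT, Matrix.conjTranspose_sub, Matrix.conjTranspose_one, hermPb]
    · have hsq : ((1 : Matrix Y Y ℂ) - mpow β 0) * (1 - mpow β 0) = 1 - mpow β 0 := by
        have h2 : ((1 : Matrix Y Y ℂ) - mpow β 0) * (1 - mpow β 0)
            = 1 - mpow β 0 - mpow β 0 + mpow β 0 * mpow β 0 := by noncomm_ring
        rw [h2, hβidem]
        abel
      simp only [kron3_mul, hsq, one_mul]
    · rw [trace_kron3_Y, Matrix.sub_mul, one_mul, hYfix, sub_self, Matrix.trace_zero]
  have projM : kron3 (1 : Matrix X X ℂ) (1 : Matrix Y Y ℂ) (mpow (margM ρ) 0) * ρ = ρ := by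
    refine projgen _ (kron3 1 1 ((1 : Matrix M M ℂ) - mpow (margM ρ) 0)) ?_ ?_ ?_ ?_
    · rw [kron3_sub_right, kron3_one]
    · simp only [kron3_conjT, Matrix.conjTranspose_sub, Matrix.conjTranspose_one, hermPm]
    · have hsq : ((1 : Matrix M M ℂ) - mpow (margM ρ) 0) * (1 - mpow (margM ρ) 0)
          = 1 - mpow (margM ρ) 0 := by
        have h2 : ((1 : Matrix M M ℂ) - mpow (margM ρ) 0) * (1 - mpow (margM ρ) 0)
            = 1 - mpow (margM ρ) 0 - mpow (margM ρ) 0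
              + mpow (margM ρ) 0 * mpow (margM ρ) 0 := by noncomm_ring
        rw [h2, hmidem]
        abel
      simp only [kron3_mul, hsq, one_mul]
    · rw [trace_kron3_M, Matrix.sub_mul, one_mul, hMfix, sub_self, Matrix.trace_zero]
  have hPr : mpow ω 0 * ρ = ρ := by
    rw [hmpowω 0]
    have hsplit : kron3 (mpow α 0) (mpow β 0) (mpow (margM ρ) 0)
        = kron3 (mpow α 0) (1 : Matrix Y Y ℂ) (1 : Matrix M M ℂ)
          * (kron3 (1 : Matrix X X ℂ) (mpow β 0) (1 : Matrix M M ℂ)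
            * kron3 (1 : Matrix X X ℂ) (1 : Matrix Y Y ℂ) (mpow (margM ρ) 0)) := by
      simp only [kron3_mul, one_mul, mul_one]
    rw [hsplit, mul_assoc, mul_assoc, projM, projY, projX]
  have hrP : ρ * mpow ω 0 = ρ := by
    have hPh0 : (mpow ω 0)ᴴ = mpow ω 0 := mpow_isHermitian ω 0
    calc ρ * mpow ω 0 = (mpow ω 0 * ρ)ᴴ := by
          rw [Matrix.conjTranspose_mul, hPh0, show ρᴴ = ρ from hρ.1]
      _ = ρᴴ := by rw [hPr]
      _ = ρ := hρ.1
  have hSne : S ≠ 0 := by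
    intro h0
    have hL0 : L = 0 := by
      refine trace_mul_conjT_self_zero _ ?_
      rw [hLh, htr, h0, Complex.ofReal_zero]
    have h14 : mpow ω (1/4) * mpow ω (-(1/4)) = mpow ω 0 := by
      rw [mpow_mul_mpow hdω0 hUω1 hωd]; norm_num
    have h14' : mpow ω (-(1/4)) * mpow ω (1/4) = mpow ω 0 := by
      rw [mpow_mul_mpow hdω0 hUω1 hωd]; norm_num
    have hρ0 : ρ = 0 := by
      calc ρ = mpow ω 0 * ρ * mpow ω 0 := by rw [hPr, hrP]
        _ = (mpow ω (1/4) * mpow ω (-(1/4))) * ρ * (mpow ω (-(1/4)) * mpow ω (1/4)) := by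
            rw [h14, h14']
        _ = mpow ω (1/4) * L * mpow ω (1/4) := by rw [hL_def]; noncomm_ring
        _ = 0 := by rw [hL0, mul_zero, zero_mul]
    rw [hρ0, Matrix.trace_zero] at hρ1
    exact zero_ne_one hρ1
  have hSpos : 0 < S := lt_of_le_of_ne hS0 (Ne.symm hSne)
  have hpow : (2 : ℝ) ^ D2 ρ ω = S := by
    unfold D2
    rw [hfrob, mul_comm (2 : ℝ) (Real.logb 2 (Real.sqrt S)),
      Real.rpow_mul (by norm_num : (0:ℝ) ≤ 2),
      Real.rpow_logb (by norm_num) (by norm_num) (Real.sqrt_pos.mpr hSpos),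
      Real.rpow_two, Real.sq_sqrt hS0]
  rw [htr, hpow]
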